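/- arXiv:2112.15262 — 2 statements merged into one kernel-verified Lean document; each statement's English description precedes it below -/
import Mathlib

section
/- Let r ≥ 3 and let θ_{k1}, θ_{k2} ∈ ℝ for k = 3, …, r. Put K̃ = (1/√2)[[I, I], [I, -I]] with I = I_{2^{r-2}}, and P_± = Π_{k=3}^r P_{k-1,1}^(r-1)(±θ_{k1} + θ_{k2}). Then K̃ · diag(P_+, P_-) · K̃ = Π_{k=3}^r P_{k2}^(r)(θ_{k2}) · Π_{k=3}^r [ K̃ · diag(P_{k-1,1}^(r-1)(θ_{k1}), transpose(P_{k-1,1}^(r-1)(θ_{k1}))) · K̃ ]. -/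
/-!
Common definitions for zeta functions associated with homogeneous cones
(following Nakashima, "Functional equations of zeta functions associated
with homogeneous cones"): the functions `c(z) = cos (π z / 2)`,
`s(z) = sin (π z / 2)`, the recursive ordering of the sign set
`I_r = {1,-1}^r`, the Hadamard matrices `J^(r)`, the gamma-matrix
`A_r(α; Θ)`, the matrices `C_r`, `S_r`, the diagonal matrices `D_j^(r)(α)`,
and the rotation matrices `P_{kj}^(r)(θ) = c(θ)·I + s(θ)·X_{kj}^(r)`.
Matrices indexed by `I_s` are identified with `2^s × 2^s` matrices via the
recursive ordering, which is encoded by `ord s : Fin (2^s) → (Fin s → ℤ)`,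
sending a position to the corresponding sign vector.
-/

noncomputable section
open Matrix Complex

namespace HomCone

/-- `c(z) = cos (π z / 2)`. -/
def cc (z : ℂ) : ℂ := Complex.cos (Real.pi * z / 2)

/-- `s(z) = sin (π z / 2)`. -/
def ss (z : ℂ) : ℂ := Complex.sin (Real.pi * z / 2)

/-- The recursive ordering of `I_r = {1,-1}^r`: `ord r i` is the `i`-th sign
vector of `I_r` (positions starting from `0`).  For `r+1`: the `i`-th element
of `I_{r+1}` is `(1, ε_i)` for `i < 2^r` and `(-1, -ε_{i-2^r})` otherwise,
where `ε_i` is the `i`-th element of `I_r`. -/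
def ord : (r : ℕ) → Fin (2 ^ r) → Fin r → ℤ
  | 0, _, j => j.elim0
  | r + 1, i, j =>
    if h : (i : ℕ) < 2 ^ r then
      (if _ : (j : ℕ) = 0 then 1
       else ord r ⟨(i : ℕ), h⟩ ⟨(j : ℕ) - 1, by have := j.isLt; omega⟩)
    else
      (if _ : (j : ℕ) = 0 then -1
       else - ord r ⟨(i : ℕ) - 2 ^ r, by
              have h1 := i.isLt
              have h2 : 2 ^ (r + 1) = 2 ^ r * 2 := pow_succ 2 r
              omega⟩ ⟨(j : ℕ) - 1, by have := j.isLt; omega⟩)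

/-- The `l`-th binary digit (`l = 1, …, m`, with `l = 1` the most significant)
of a position `i ∈ Fin (2^m)`; by convention `0` for `l` outside `1, …, m`. -/
def bitv (m : ℕ) (i : Fin (2 ^ m)) (l : ℕ) : ℕ :=
  if 1 ≤ l ∧ l ≤ m ∧ (i : ℕ).testBit (m - l) then 1 else 0

/-- The Hadamard matrix `J^(r)`, defined recursively by
`J^(0) = (1)` and `J^(r+1) = J^(1) ⊗ J^(r)`, i.e. `J^(r+1)` is the `2 × 2`
block matrix `(1/√2) [[J^(r), J^(r)], [J^(r), -J^(r)]]`. -/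
def Jmat : (r : ℕ) → Matrix (Fin (2 ^ r)) (Fin (2 ^ r)) ℂ
  | 0 => 1
  | r + 1 => fun i i' =>
    ((Real.sqrt 2 : ℂ))⁻¹ *
      (if 2 ^ r ≤ (i : ℕ) ∧ 2 ^ r ≤ (i' : ℕ) then -1 else 1) *
      Jmat r ⟨(i : ℕ) % 2 ^ r, Nat.mod_lt _ (Nat.two_pow_pos r)⟩
             ⟨(i' : ℕ) % 2 ^ r, Nat.mod_lt _ (Nat.two_pow_pos r)⟩

/-- The matrix `A_r(α; Θ)` of size `2^r`, with `(ε, δ)` entry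
`exp((π√-1/2)(Σ_i ε_i δ_i α_i + Σ_{j<k} ε_j δ_k θ_{kj}))`, rows and columns
being indexed by `I_r` via the recursive ordering; here `θ_{kj} = Θ k j`. -/
def Amat (r : ℕ) (α : Fin r → ℂ) (Θ : Fin r → Fin r → ℝ) :
    Matrix (Fin (2 ^ r)) (Fin (2 ^ r)) ℂ := fun i i' =>
  Complex.exp (Real.pi * Complex.I / 2 *
    ((∑ a : Fin r, (ord r i a : ℂ) * (ord r i' a : ℂ) * α a) +
     ∑ a : Fin r, ∑ b : Fin r,
       if a < b then (ord r i a : ℂ) * (ord r i' b : ℂ) * (Θ b a : ℂ) else 0))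

/-- The element of `I_r^0 = {ε ∈ {1,-1}^r : ε_1 = 1}` at position
`i ∈ Fin (2^(r-1))`, via the identification of `I_r^0` with `I_{r-1}`
dropping the first coordinate (with the induced ordering). -/
def sgn0 (r : ℕ) (i : Fin (2 ^ (r - 1))) (a : Fin r) : ℤ :=
  if _ : (a : ℕ) = 0 then 1
  else ord (r - 1) i ⟨(a : ℕ) - 1, by have := a.isLt; omega⟩

/-- The matrix `C_r(α; Θ)` of size `2^(r-1)`, with `(ε, δ)` entry
`c(Σ_i ε_i δ_i α_i + Σ_{j<k} ε_j δ_k θ_{kj})` for `ε, δ ∈ I_r^0`. -/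
def Cmat (r : ℕ) (α : Fin r → ℂ) (Θ : Fin r → Fin r → ℝ) :
    Matrix (Fin (2 ^ (r - 1))) (Fin (2 ^ (r - 1))) ℂ := fun i i' =>
  cc ((∑ a : Fin r, (sgn0 r i a : ℂ) * (sgn0 r i' a : ℂ) * α a) +
     ∑ a : Fin r, ∑ b : Fin r,
       if a < b then (sgn0 r i a : ℂ) * (sgn0 r i' b : ℂ) * (Θ b a : ℂ) else 0)

/-- The matrix `S_r(α; Θ)` of size `2^(r-1)`, with `(ε, δ)` entry
`s(Σ_i ε_i δ_i α_i + Σ_{j<k} ε_j δ_k θ_{kj})` for `ε, δ ∈ I_r^0`. -/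
def Smat (r : ℕ) (α : Fin r → ℂ) (Θ : Fin r → Fin r → ℝ) :
    Matrix (Fin (2 ^ (r - 1))) (Fin (2 ^ (r - 1))) ℂ := fun i i' =>
  ss ((∑ a : Fin r, (sgn0 r i a : ℂ) * (sgn0 r i' a : ℂ) * α a) +
     ∑ a : Fin r, ∑ b : Fin r,
       if a < b then (sgn0 r i a : ℂ) * (sgn0 r i' b : ℂ) * (Θ b a : ℂ) else 0)

/-- The `i`-th diagonal entry of the diagonal matrix `D_j^(r)(α)` of size
`2^(r-1)`, defined recursively:
`D_1^(r)(α) = diag(c(α)·I_{2^(r-2)}, s(α)·I_{2^(r-2)})` (for `r = 2` this is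
`diag(c(α), s(α))`), `D_2^(r)(α) = diag(D_1^(r-1)(α), D_1^(r-1)(α+1))`
(for `r = 2` this gives `D_2^(2)(α) = diag(c(α), -s(α))`), and
`D_k^(r)(α) = diag(D_{k-1}^(r-1)(α), D_{k-1}^(r-1)(α))` for `3 ≤ k ≤ r`. -/
def dEnt : (r : ℕ) → (j : ℕ) → ℂ → Fin (2 ^ (r - 1)) → ℂ
  | r, 0, _, _ => 0
  | r, 1, α, i => if (i : ℕ) < 2 ^ (r - 2) then cc α else ss α
  | r, 2, α, i =>
    if h : (i : ℕ) < 2 ^ (r - 2) then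
      dEnt (r - 1) 1 α ⟨(i : ℕ), by
        have h3 : r - 1 - 1 = r - 2 := by omega
        rw [h3]; exact h⟩
    else
      dEnt (r - 1) 1 (α + 1) ⟨(i : ℕ) - 2 ^ (r - 2), by
        have h1 := i.isLt
        have h2 : 2 ^ (r - 1) ≤ 2 * 2 ^ (r - 2) := by
          calc 2 ^ (r - 1) ≤ 2 ^ (r - 2 + 1) :=
                Nat.pow_le_pow_right (by norm_num) (by omega)
            _ = 2 * 2 ^ (r - 2) := by rw [pow_succ]; exact Nat.mul_comm _ _
        have h3 : r - 1 - 1 = r - 2 := by omega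
        rw [h3]; omega⟩
  | r, j + 3, α, i =>
    if h : (i : ℕ) < 2 ^ (r - 2) then
      dEnt (r - 1) (j + 2) α ⟨(i : ℕ), by
        have h3 : r - 1 - 1 = r - 2 := by omega
        rw [h3]; exact h⟩
    else
      dEnt (r - 1) (j + 2) α ⟨(i : ℕ) - 2 ^ (r - 2), by
        have h1 := i.isLt
        have h2 : 2 ^ (r - 1) ≤ 2 * 2 ^ (r - 2) := by
          calc 2 ^ (r - 1) ≤ 2 ^ (r - 2 + 1) :=
                Nat.pow_le_pow_right (by norm_num) (by omega)
            _ = 2 * 2 ^ (r - 2) := by rw [pow_succ]; exact Nat.mul_comm _ _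
        have h3 : r - 1 - 1 = r - 2 := by omega
        rw [h3]; omega⟩

/-- The diagonal matrix `D_j^(r)(α)` of size `2^(r-1)` (`j = 1, …, r`). -/
def Dmat (r j : ℕ) (α : ℂ) : Matrix (Fin (2 ^ (r - 1))) (Fin (2 ^ (r - 1))) ℂ :=
  Matrix.diagonal (dEnt r j α)

/-- The matrix `X_{kj}^(r) = I_{2^(j-1)} ⊗ R₂ ⊗ A₂^{⊗(k-j-1)} ⊗ I_{2^(r-k)}`
of size `2^(r-1)` (`1 ≤ j < k ≤ r`), where `R₂ = [[0,-1],[1,0]]` and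
`A₂ = [[0,1],[1,0]]`, written out entrywise via binary digits (the factors of
the Kronecker product act on the binary digits, the first factor acting on
the most significant digits): the `(i, i')` entry is nonzero iff the digits
of `i` and `i'` agree at the positions `l < j` and `l ≥ k` (the identity
factors) and disagree at the positions `j ≤ l ≤ k-1` (the factors `R₂` and
`A₂`), and the nonzero value is `-1` when the `j`-th digit of `i` is `0`,
and `1` when it is `1` (the factor `R₂`). -/
def Xmat (r j k : ℕ) : Matrix (Fin (2 ^ (r - 1))) (Fin (2 ^ (r - 1))) ℂ :=
  fun i i' =>
    if (∀ l ∈ Finset.range r, (l < j ∨ k ≤ l) → bitv (r - 1) i l = bitv (r - 1) i' l)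
        ∧ (∀ l ∈ Finset.range r, j ≤ l → l < k → bitv (r - 1) i l ≠ bitv (r - 1) i' l)
    then (if bitv (r - 1) i j = 0 then -1 else 1) else 0

/-- The orthogonal matrix `P_{kj}^(r)(θ) = c(θ)·I_{2^(r-1)} + s(θ)·X_{kj}^(r)`. -/
def Pmat (r j k : ℕ) (θ : ℝ) : Matrix (Fin (2 ^ (r - 1))) (Fin (2 ^ (r - 1))) ℂ :=
  cc θ • (1 : Matrix (Fin (2 ^ (r - 1))) (Fin (2 ^ (r - 1))) ℂ) + ss θ • Xmat r j k

lemma two_pow_pred (m : ℕ) (h : 1 ≤ m) : 2 ^ (m - 1) + 2 ^ (m - 1) = 2 ^ m := by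
  have h1 : m - 1 + 1 = m := by omega
  have h2 : 2 ^ (m - 1 + 1) = 2 ^ (m - 1) * 2 := pow_succ 2 (m - 1)
  rw [h1] at h2
  omega

/-- The identification `Fin (2^(m-1)) ⊕ Fin (2^(m-1)) ≃ Fin (2^m)` used to
regard a `2 × 2` block matrix with blocks of size `2^(m-1)` as a matrix of
size `2^m`. -/
def sumEquiv (m : ℕ) (h : 1 ≤ m) : Fin (2 ^ (m - 1)) ⊕ Fin (2 ^ (m - 1)) ≃ Fin (2 ^ m) :=
  finSumFinEquiv.trans (finCongr (two_pow_pred m h))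

/-- The matrix `K̃ = (1/√2) [[I, I], [I, -I]]` of size `2^m`, with
`I = I_{2^(m-1)}`. -/
def Ktilde (m : ℕ) (h : 1 ≤ m) : Matrix (Fin (2 ^ m)) (Fin (2 ^ m)) ℂ :=
  Matrix.reindex (sumEquiv m h) (sumEquiv m h)
    (((Real.sqrt 2 : ℂ))⁻¹ • Matrix.fromBlocks 1 1 1 (-1))

def mask (m j k : ℕ) : ℕ := (2 ^ (k - j) - 1) <<< (m - k)

lemma testBit_mask {m j k : ℕ} (hjk : j < k) (hkm : k ≤ m) (p : ℕ) :
    (mask m j k).testBit p = (decide (m - k ≤ p) && decide (p < m - j)) := by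
  rw [mask, Nat.testBit_shiftLeft, Nat.testBit_two_pow_sub_one]
  have h1 : m - k ≤ p → (p - (m - k) < k - j ↔ p < m - j) := by omega
  by_cases h : m - k ≤ p
  · simp [h, decide_eq_decide.mpr (h1 h)]
  · simp [h]

lemma mask_lt {m j k : ℕ} (hj : 1 ≤ j) (hjk : j < k) (hkm : k ≤ m) :
    mask m j k < 2 ^ (m - 1) := by
  rw [mask, Nat.shiftLeft_eq]
  calc (2 ^ (k - j) - 1) * 2 ^ (m - k) < 2 ^ (k - j) * 2 ^ (m - k) :=
        (Nat.mul_lt_mul_right (Nat.two_pow_pos _)).2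
          (Nat.sub_lt (Nat.two_pow_pos _) one_pos)
    _ = 2 ^ (k - j + (m - k)) := (pow_add 2 _ _).symm
    _ ≤ 2 ^ (m - 1) := Nat.pow_le_pow_right (by norm_num) (by omega)

def sgn (m j : ℕ) (i : Fin (2 ^ (m - 1))) : ℂ :=
  if (i : ℕ).testBit (m - 1 - j) then 1 else -1

def flipF (m j k : ℕ) (i : Fin (2 ^ (m - 1))) : Fin (2 ^ (m - 1)) :=
  if h : (i : ℕ) ^^^ mask m j k < 2 ^ (m - 1) then ⟨_, h⟩ else i

lemma flipF_coe {m j k : ℕ} (hj : 1 ≤ j) (hjk : j < k) (hkm : k ≤ m)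
    (i : Fin (2 ^ (m - 1))) : (flipF m j k i : ℕ) = (i : ℕ) ^^^ mask m j k := by
  rw [flipF, dif_pos (Nat.xor_lt_two_pow i.isLt (mask_lt hj hjk hkm))]

lemma xcond_iff {m j k : ℕ} (hj : 1 ≤ j) (hjk : j < k) (hkm : k ≤ m)
    (i i' : Fin (2 ^ (m - 1))) :
    ((∀ l ∈ Finset.range m, (l < j ∨ k ≤ l) → bitv (m - 1) i l = bitv (m - 1) i' l)
      ∧ (∀ l ∈ Finset.range m, j ≤ l → l < k → bitv (m - 1) i l ≠ bitv (m - 1) i' l))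
    ↔ (i' : ℕ) = (i : ℕ) ^^^ mask m j k := by
  have hm : 2 ≤ m := by omega
  have hbv : ∀ (x : Fin (2 ^ (m - 1))) (l : ℕ), 1 ≤ l → l ≤ m - 1 →
      bitv (m - 1) x l = if (x : ℕ).testBit (m - 1 - l) then 1 else 0 := by
    intro x l h1 h2
    simp [bitv, h1, h2]
  constructor
  · rintro ⟨hA, hB⟩
    apply Nat.eq_of_testBit_eq
    intro p
    rw [Nat.testBit_xor, testBit_mask hjk hkm]
    by_cases hp : p < m - 1
    · set l := m - 1 - p with hl
      have hpl : m - 1 - l = p := by omega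
      have h1 : 1 ≤ l := by omega
      have h2 : l ≤ m - 1 := by omega
      have hlr : l ∈ Finset.range m := Finset.mem_range.2 (by omega)
      by_cases hc : j ≤ l ∧ l < k
      · have hmask : (decide (m - k ≤ p) && decide (p < m - j)) = true := by
          simp only [Bool.and_eq_true, decide_eq_true_eq]; omega
        rw [hmask]
        have := hB l hlr hc.1 hc.2
        rw [hbv i l h1 h2, hbv i' l h1 h2, hpl] at this
        cases hx : (i : ℕ).testBit p <;> cases hy : (i' : ℕ).testBit p <;>
          simp_all
      · have hmask : (decide (m - k ≤ p) && decide (p < m - j)) = false := by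
          simp only [Bool.and_eq_false_iff, decide_eq_false_iff_not]; omega
        rw [hmask]
        have := hA l hlr (by omega)
        rw [hbv i l h1 h2, hbv i' l h1 h2, hpl] at this
        cases hx : (i : ℕ).testBit p <;> cases hy : (i' : ℕ).testBit p <;>
          simp_all
    · have hip : (i : ℕ).testBit p = false :=
        Nat.testBit_lt_two_pow (lt_of_lt_of_le i.isLt
          (Nat.pow_le_pow_right (by norm_num) (by omega)))
      have hip' : (i' : ℕ).testBit p = false :=
        Nat.testBit_lt_two_pow (lt_of_lt_of_le i'.isLt
          (Nat.pow_le_pow_right (by norm_num) (by omega)))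
      have hmask : (decide (m - k ≤ p) && decide (p < m - j)) = false := by
        simp only [Bool.and_eq_false_iff, decide_eq_false_iff_not]; omega
      rw [hip, hip', hmask]
      rfl
  · intro h
    have key : ∀ p, (i' : ℕ).testBit p =
        ((i : ℕ).testBit p ^^ ((mask m j k).testBit p)) := by
      intro p; rw [h, Nat.testBit_xor]
    constructor
    · intro l hlm hcond
      have hlm' : l < m := Finset.mem_range.1 hlm
      by_cases h1 : 1 ≤ l ∧ l ≤ m - 1
      · rw [hbv i l h1.1 h1.2, hbv i' l h1.1 h1.2]
        have := key (m - 1 - l)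
        rw [testBit_mask hjk hkm] at this
        have hmask : (decide (m - k ≤ m - 1 - l) && decide (m - 1 - l < m - j)) = false := by
          simp only [Bool.and_eq_false_iff, decide_eq_false_iff_not]; omega
        rw [hmask] at this
        simp only [Bool.xor_false] at this
        rw [this]
      · have hl0 : l = 0 := by omega
        subst hl0
        simp [bitv]
    · intro l _ hjl hlk
      have h1 : 1 ≤ l := by omega
      have h2 : l ≤ m - 1 := by omega
      rw [hbv i l h1 h2, hbv i' l h1 h2]
      have := key (m - 1 - l)
      rw [testBit_mask hjk hkm] at this
      have hmask : (decide (m - k ≤ m - 1 - l) && decide (m - 1 - l < m - j)) = true := by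
        simp only [Bool.and_eq_true, decide_eq_true_eq]; omega
      rw [hmask] at this
      simp only [Bool.xor_true] at this
      rw [this]
      cases (i : ℕ).testBit (m - 1 - l) <;> simp

lemma Xmat_eq {m j k : ℕ} (hj : 1 ≤ j) (hjk : j < k) (hkm : k ≤ m) :
    Xmat m j k = Matrix.of fun i i' =>
      sgn m j i * if flipF m j k i = i' then (1 : ℂ) else 0 := by
  funext i i'
  rw [Xmat, Matrix.of_apply]
  have hcond : ((∀ l ∈ Finset.range m, (l < j ∨ k ≤ l) → bitv (m - 1) i l = bitv (m - 1) i' l)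
      ∧ (∀ l ∈ Finset.range m, j ≤ l → l < k → bitv (m - 1) i l ≠ bitv (m - 1) i' l))
      ↔ flipF m j k i = i' := by
    rw [xcond_iff hj hjk hkm, Fin.ext_iff, flipF_coe hj hjk hkm, eq_comm]
  have hsgn : (if bitv (m - 1) i j = 0 then (-1 : ℂ) else 1) = sgn m j i := by
    have : bitv (m - 1) i j = if (i : ℕ).testBit (m - 1 - j) then 1 else 0 := by
      simp [bitv, hj, show j ≤ m - 1 by omega]
    rw [this, sgn]
    cases (i : ℕ).testBit (m - 1 - j) <;> simp
  by_cases h : flipF m j k i = i'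
  · rw [if_pos (hcond.2 h), if_pos h, hsgn, mul_one]
  · rw [if_neg (fun hc => h (hcond.1 hc)), if_neg h, mul_zero]

lemma flipF_invol {m j k : ℕ} (hj : 1 ≤ j) (hjk : j < k) (hkm : k ≤ m)
    (i : Fin (2 ^ (m - 1))) : flipF m j k (flipF m j k i) = i := by
  apply Fin.ext
  rw [flipF_coe hj hjk hkm, flipF_coe hj hjk hkm, Nat.xor_assoc, Nat.xor_self, Nat.xor_zero]

lemma flipF_flipF {m j k k' : ℕ} (hj : 1 ≤ j) (hjk : j < k) (hkm : k ≤ m)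
    (hjk' : j < k') (hk'm : k' ≤ m) (i : Fin (2 ^ (m - 1))) :
    flipF m j k (flipF m j k' i) = flipF m j k' (flipF m j k i) := by
  apply Fin.ext
  rw [flipF_coe hj hjk hkm, flipF_coe hj hjk' hk'm, flipF_coe hj hjk' hk'm,
    flipF_coe hj hjk hkm, Nat.xor_assoc, Nat.xor_assoc, Nat.xor_comm (mask m j k')]

lemma sgn_flipF {m j k : ℕ} (hj : 1 ≤ j) (hjk : j < k) (hkm : k ≤ m)
    (i : Fin (2 ^ (m - 1))) : sgn m j (flipF m j k i) = -sgn m j i := by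
  have h : ((flipF m j k i : ℕ)).testBit (m - 1 - j) = !((i : ℕ).testBit (m - 1 - j)) := by
    rw [flipF_coe hj hjk hkm, Nat.testBit_xor, testBit_mask hjk hkm]
    have hh : (decide (m - k ≤ m - 1 - j) && decide (m - 1 - j < m - j)) = true := by
      simp only [Bool.and_eq_true, decide_eq_true_eq]; omega
    rw [hh, Bool.xor_true]
  rw [sgn, sgn, h]
  cases (i : ℕ).testBit (m - 1 - j) <;> simp

lemma sgn_mul_self (m j : ℕ) (i : Fin (2 ^ (m - 1))) : sgn m j i * sgn m j i = 1 := by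
  rw [sgn]; cases (i : ℕ).testBit (m - 1 - j) <;> simp

lemma genperm_mul {n : Type*} [Fintype n] [DecidableEq n] (s : n → ℂ) (f : n → n)
    (Y : Matrix n n ℂ) (i i' : n) :
    ((Matrix.of fun a b => s a * if f a = b then (1 : ℂ) else 0) * Y) i i' =
      s i * Y (f i) i' := by
  rw [Matrix.mul_apply]
  have h : ∀ b, (Matrix.of fun a b => s a * if f a = b then (1 : ℂ) else 0) i b * Y b i' =
      if f i = b then s i * Y b i' else 0 := by
    intro b; simp only [Matrix.of_apply]; split <;> simp
  simp only [h, Finset.sum_ite_eq, Finset.mem_univ, if_true]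

lemma Xmat_mul {m j k : ℕ} (hj : 1 ≤ j) (hjk : j < k) (hkm : k ≤ m)
    (Y : Matrix (Fin (2 ^ (m - 1))) (Fin (2 ^ (m - 1))) ℂ) (i i' : Fin (2 ^ (m - 1))) :
    (Xmat m j k * Y) i i' = sgn m j i * Y (flipF m j k i) i' := by
  rw [Xmat_eq hj hjk hkm, genperm_mul]

lemma Xmat_mul_self {m j k : ℕ} (hj : 1 ≤ j) (hjk : j < k) (hkm : k ≤ m) :
    Xmat m j k * Xmat m j k = -1 := by
  funext i i'
  rw [Xmat_mul hj hjk hkm]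
  conv_lhs => rw [Xmat_eq hj hjk hkm]
  simp only [Matrix.of_apply]
  rw [sgn_flipF hj hjk hkm, flipF_invol hj hjk hkm]
  rw [Matrix.neg_apply, Matrix.one_apply]
  by_cases h : i = i'
  · rw [if_pos h, mul_one, mul_neg, sgn_mul_self]
  · rw [if_neg h]; ring

lemma Xmat_transpose {m j k : ℕ} (hj : 1 ≤ j) (hjk : j < k) (hkm : k ≤ m) :
    (Xmat m j k)ᵀ = -(Xmat m j k) := by
  rw [Xmat_eq hj hjk hkm]
  funext i i'
  simp only [Matrix.transpose_apply, Matrix.of_apply, Matrix.neg_apply]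
  by_cases h : flipF m j k i = i'
  · have h1 : flipF m j k i' = i := by rw [← h, flipF_invol hj hjk hkm]
    rw [if_pos h1, if_pos h, ← h, sgn_flipF hj hjk hkm]; ring
  · have h2 : flipF m j k i' ≠ i := by
      intro hc
      exact h (by rw [← hc, flipF_invol hj hjk hkm])
    rw [if_neg h2, if_neg h]; ring

lemma Xmat_mul_comm {m j k k' : ℕ} (hj : 1 ≤ j) (hjk : j < k) (hkm : k ≤ m)
    (hjk' : j < k') (hk'm : k' ≤ m) :
    Xmat m j k * Xmat m j k' = Xmat m j k' * Xmat m j k := by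
  funext i i'
  rw [Xmat_mul hj hjk hkm, Xmat_mul hj hjk' hk'm]
  conv_lhs => rw [Xmat_eq hj hjk' hk'm]
  conv_rhs => rw [Xmat_eq hj hjk hkm]
  simp only [Matrix.of_apply]
  rw [sgn_flipF hj hjk hkm, sgn_flipF hj hjk' hk'm,
    flipF_flipF hj hjk' hk'm hjk hkm]

/-! ### trig addition -/

lemma cc_add (a b : ℂ) : cc (a + b) = cc a * cc b - ss a * ss b := by
  rw [cc, cc, cc, ss, ss,
    show (Real.pi : ℂ) * (a + b) / 2 = Real.pi * a / 2 + Real.pi * b / 2 by ring,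
    Complex.cos_add]

lemma ss_add (a b : ℂ) : ss (a + b) = ss a * cc b + cc a * ss b := by
  rw [cc, cc, ss, ss, ss,
    show (Real.pi : ℂ) * (a + b) / 2 = Real.pi * a / 2 + Real.pi * b / 2 by ring,
    Complex.sin_add]

lemma cc_neg (a : ℂ) : cc (-a) = cc a := by
  rw [cc, cc, show (Real.pi : ℂ) * (-a) / 2 = -(Real.pi * a / 2) by ring, Complex.cos_neg]

lemma ss_neg (a : ℂ) : ss (-a) = -ss a := by
  rw [ss, ss, show (Real.pi : ℂ) * (-a) / 2 = -(Real.pi * a / 2) by ring, Complex.sin_neg]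

lemma coe_add (a b : ℝ) : ((a + b : ℝ) : ℂ) = (a : ℂ) + b := by push_cast; ring

lemma Pmat_mul {m k : ℕ} (hk : 2 ≤ k) (hkm : k ≤ m) (a b : ℝ) :
    Pmat m 1 k a * Pmat m 1 k b = Pmat m 1 k (a + b) := by
  have hX := Xmat_mul_self (le_refl 1) (show 1 < k by omega) hkm
  rw [Pmat, Pmat, Pmat]
  simp only [add_mul, mul_add, Matrix.smul_mul, Matrix.mul_smul, smul_smul,
    one_mul, mul_one, hX]
  rw [coe_add, cc_add, ss_add]
  module

lemma Pmat_transpose {m k : ℕ} (hk : 2 ≤ k) (hkm : k ≤ m) (θ : ℝ) :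
    (Pmat m 1 k θ)ᵀ = Pmat m 1 k (-θ) := by
  rw [Pmat, Pmat, Matrix.transpose_add, Matrix.transpose_smul, Matrix.transpose_smul,
    Matrix.transpose_one, Xmat_transpose (le_refl 1) (show 1 < k by omega) hkm,
    show ((-θ : ℝ) : ℂ) = -(θ : ℂ) by push_cast; ring, cc_neg, ss_neg]
  module

lemma Pmat_commute {m k k' : ℕ} (hk : 2 ≤ k) (hkm : k ≤ m) (hk' : 2 ≤ k') (hk'm : k' ≤ m)
    (a b : ℝ) : Commute (Pmat m 1 k a) (Pmat m 1 k' b) := by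
  have hX : Commute (Xmat m 1 k) (Xmat m 1 k') :=
    Xmat_mul_comm (le_refl 1) (show 1 < k by omega) hkm (show 1 < k' by omega) hk'm
  rw [Pmat, Pmat]
  apply Commute.add_left
  · exact ((Commute.one_left _).smul_left _)
  · apply Commute.smul_left
    apply Commute.add_right
    · exact ((Commute.one_right _).smul_right _)
    · exact hX.smul_right _

lemma testBit_pow_add {n x : ℕ} (hx : x < 2 ^ n) (p : ℕ) (hp : p ≠ n) :
    (2 ^ n + x).testBit p = x.testBit p := by
  rcases Nat.lt_or_ge p n with h | h
  · exact Nat.testBit_two_pow_add_gt h x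
  · rw [Nat.testBit_lt_two_pow, Nat.testBit_lt_two_pow]
    · exact lt_of_lt_of_le hx (Nat.pow_le_pow_right (by norm_num) (by omega))
    · have h2 : 2 ^ (n + 1) = 2 ^ n * 2 := pow_succ 2 n
      have h3 : 2 ^ n + x < 2 ^ (n + 1) := by omega
      exact lt_of_lt_of_le h3 (Nat.pow_le_pow_right (by norm_num) (by omega))

lemma testBit_pow_add_self {n x : ℕ} (hx : x < 2 ^ n) : (2 ^ n + x).testBit n = true := by
  rw [Nat.testBit_two_pow_add_eq, Nat.testBit_lt_two_pow hx]
  rfl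

lemma pow_add_xor {n x y : ℕ} (hx : x < 2 ^ n) (hy : y < 2 ^ n) :
    (2 ^ n + x) ^^^ y = 2 ^ n + (x ^^^ y) := by
  apply Nat.eq_of_testBit_eq
  intro p
  rw [Nat.testBit_xor]
  by_cases hp : p = n
  · subst hp
    rw [testBit_pow_add_self hx, testBit_pow_add_self (Nat.xor_lt_two_pow hx hy),
      Nat.testBit_lt_two_pow hy]
    rfl
  · rw [testBit_pow_add hx p hp, testBit_pow_add (Nat.xor_lt_two_pow hx hy) p hp,
      Nat.testBit_xor]

lemma sumEquiv_inl_coe (m : ℕ) (h : 1 ≤ m) (a : Fin (2 ^ (m - 1))) :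
    ((sumEquiv m h (Sum.inl a)) : ℕ) = (a : ℕ) := by
  simp [sumEquiv]

lemma sumEquiv_inr_coe (m : ℕ) (h : 1 ≤ m) (a : Fin (2 ^ (m - 1))) :
    ((sumEquiv m h (Sum.inr a)) : ℕ) = 2 ^ (m - 1) + (a : ℕ) := by
  simp [sumEquiv]
  omega

lemma mask_eq (r k : ℕ) (hk : 3 ≤ k) (hkr : k ≤ r) :
    mask r 2 k = mask (r - 1) 1 (k - 1) := by
  rw [mask, mask, show k - 2 = k - 1 - 1 from by omega,
    show r - k = r - 1 - (k - 1) from by omega]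

lemma Xmat_struct (r k : ℕ) (hr : 3 ≤ r) (hk : 3 ≤ k) (hkr : k ≤ r) (h2 : 1 ≤ r - 1) :
    Xmat r 2 k = Matrix.reindex (sumEquiv (r - 1) h2) (sumEquiv (r - 1) h2)
      (Matrix.fromBlocks (Xmat (r - 1) 1 (k - 1)) 0 0 (Xmat (r - 1) 1 (k - 1))) := by
  have hj2 : (1 : ℕ) ≤ 2 := one_le_two
  have hjk2 : (2 : ℕ) < k := by omega
  have hj1 : (1 : ℕ) ≤ 1 := le_refl 1
  have hjk1 : (1 : ℕ) < k - 1 := by omega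
  have hk1m : k - 1 ≤ r - 1 := by omega
  have hmask : mask r 2 k = mask (r - 1) 1 (k - 1) := mask_eq r k hk hkr
  have hmlt : mask (r - 1) 1 (k - 1) < 2 ^ (r - 1 - 1) := mask_lt hj1 hjk1 hk1m
  rw [Xmat_eq hj2 hjk2 hkr, Xmat_eq hj1 hjk1 hk1m]
  funext i i'
  rw [Matrix.reindex_apply, Matrix.submatrix_apply]
  obtain ⟨x, rfl⟩ := (sumEquiv (r - 1) h2).surjective i
  obtain ⟨y, rfl⟩ := (sumEquiv (r - 1) h2).surjective i'
  rw [Equiv.symm_apply_apply, Equiv.symm_apply_apply]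
  rcases x with a | a <;> rcases y with b | b
  · simp only [Matrix.fromBlocks_apply₁₁, Matrix.of_apply]
    have hs : sgn r 2 (sumEquiv (r - 1) h2 (Sum.inl a)) = sgn (r - 1) 1 a := by
      rw [sgn, sgn, sumEquiv_inl_coe, show r - 1 - 2 = r - 1 - 1 - 1 from by omega]
    have hcond : (flipF r 2 k (sumEquiv (r - 1) h2 (Sum.inl a)) = sumEquiv (r - 1) h2 (Sum.inl b))
        ↔ (flipF (r - 1) 1 (k - 1) a = b) := by
      rw [Fin.ext_iff, Fin.ext_iff, flipF_coe hj2 hjk2 hkr, flipF_coe hj1 hjk1 hk1m,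
        sumEquiv_inl_coe, sumEquiv_inl_coe, hmask]
    rw [hs, if_congr hcond rfl rfl]
  · simp only [Matrix.fromBlocks_apply₁₂, Matrix.zero_apply, Matrix.of_apply]
    have hcond : flipF r 2 k (sumEquiv (r - 1) h2 (Sum.inl a)) ≠ sumEquiv (r - 1) h2 (Sum.inr b) := by
      intro hc
      have hc2 := congrArg Fin.val hc
      rw [flipF_coe hj2 hjk2 hkr, sumEquiv_inl_coe, sumEquiv_inr_coe, hmask] at hc2
      have hx : (a : ℕ) ^^^ mask (r - 1) 1 (k - 1) < 2 ^ (r - 1 - 1) :=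
        Nat.xor_lt_two_pow a.isLt hmlt
      omega
    rw [if_neg hcond, mul_zero]
  · simp only [Matrix.fromBlocks_apply₂₁, Matrix.zero_apply, Matrix.of_apply]
    have hcond : flipF r 2 k (sumEquiv (r - 1) h2 (Sum.inr a)) ≠ sumEquiv (r - 1) h2 (Sum.inl b) := by
      intro hc
      have hc2 := congrArg Fin.val hc
      rw [flipF_coe hj2 hjk2 hkr, sumEquiv_inr_coe, sumEquiv_inl_coe, hmask,
        pow_add_xor a.isLt hmlt] at hc2
      have hb := b.isLt
      omega
    rw [if_neg hcond, mul_zero]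
  · simp only [Matrix.fromBlocks_apply₂₂, Matrix.of_apply]
    have hs : sgn r 2 (sumEquiv (r - 1) h2 (Sum.inr a)) = sgn (r - 1) 1 a := by
      rw [sgn, sgn, sumEquiv_inr_coe, show r - 1 - 2 = r - 1 - 1 - 1 from by omega,
        testBit_pow_add a.isLt _ (by omega)]
    have hcond : (flipF r 2 k (sumEquiv (r - 1) h2 (Sum.inr a)) = sumEquiv (r - 1) h2 (Sum.inr b))
        ↔ (flipF (r - 1) 1 (k - 1) a = b) := by
      rw [Fin.ext_iff, Fin.ext_iff, flipF_coe hj2 hjk2 hkr, flipF_coe hj1 hjk1 hk1m,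
        sumEquiv_inr_coe, sumEquiv_inr_coe, hmask, pow_add_xor a.isLt hmlt]
      omega
    rw [hs, if_congr hcond rfl rfl]

lemma reindex_mul {n p : Type*} [Fintype n] [Fintype p] [DecidableEq n] [DecidableEq p]
    (e : n ≃ p) (A B : Matrix n n ℂ) :
    (Matrix.reindex e e A) * (Matrix.reindex e e B) = Matrix.reindex e e (A * B) := by
  simp only [Matrix.reindex_apply]
  exact Matrix.submatrix_mul_equiv A B _ e.symm _

lemma reindex_one {n p : Type*} [Fintype n] [Fintype p] [DecidableEq n] [DecidableEq p]
    (e : n ≃ p) : Matrix.reindex e e (1 : Matrix n n ℂ) = 1 := by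
  rw [Matrix.reindex_apply]
  exact Matrix.submatrix_one_equiv e.symm

lemma reindex_add_smul {n p : Type*} [Fintype n] [Fintype p] [DecidableEq n] [DecidableEq p]
    (e : n ≃ p) (c d : ℂ) (A B : Matrix n n ℂ) :
    Matrix.reindex e e (c • A + d • B) = c • Matrix.reindex e e A + d • Matrix.reindex e e B := by
  funext i i'
  simp [Matrix.reindex_apply, Matrix.submatrix_apply]

lemma Pmat_struct (r k : ℕ) (hr : 3 ≤ r) (hk : 3 ≤ k) (hkr : k ≤ r) (h2 : 1 ≤ r - 1) (θ : ℝ) :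
    Pmat r 2 k θ = Matrix.reindex (sumEquiv (r - 1) h2) (sumEquiv (r - 1) h2)
      (Matrix.fromBlocks (Pmat (r - 1) 1 (k - 1) θ) 0 0 (Pmat (r - 1) 1 (k - 1) θ)) := by
  rw [Pmat, Pmat, Xmat_struct r k hr hk hkr h2]
  have h1 : (Matrix.fromBlocks (cc θ • (1 : Matrix (Fin (2 ^ (r - 1 - 1))) (Fin (2 ^ (r - 1 - 1))) ℂ) + ss θ • Xmat (r - 1) 1 (k - 1)) 0 0
      (cc θ • 1 + ss θ • Xmat (r - 1) 1 (k - 1)))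
      = cc θ • (1 : Matrix (Fin (2 ^ (r - 1 - 1)) ⊕ Fin (2 ^ (r - 1 - 1))) _ ℂ)
        + ss θ • Matrix.fromBlocks (Xmat (r - 1) 1 (k - 1)) 0 0 (Xmat (r - 1) 1 (k - 1)) := by
    rw [← Matrix.fromBlocks_one, Matrix.fromBlocks_smul, Matrix.fromBlocks_smul,
      Matrix.fromBlocks_add]
    simp
  rw [h1, reindex_add_smul, reindex_one]

lemma Ktilde_sq (m : ℕ) (h : 1 ≤ m) : Ktilde m h * Ktilde m h = 1 := by
  rw [Ktilde, reindex_mul]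
  have hH : (((Real.sqrt 2 : ℂ))⁻¹ • Matrix.fromBlocks (1 : Matrix (Fin (2 ^ (m - 1))) (Fin (2 ^ (m - 1))) ℂ) 1 1 (-1 : Matrix (Fin (2 ^ (m - 1))) (Fin (2 ^ (m - 1))) ℂ)) *
      (((Real.sqrt 2 : ℂ))⁻¹ • Matrix.fromBlocks (1 : Matrix (Fin (2 ^ (m - 1))) (Fin (2 ^ (m - 1))) ℂ) 1 1 (-1 : Matrix (Fin (2 ^ (m - 1))) (Fin (2 ^ (m - 1))) ℂ)) = 1 := by
    rw [Matrix.smul_mul, Matrix.mul_smul, smul_smul]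
    have h2 : ((Real.sqrt 2 : ℂ))⁻¹ * ((Real.sqrt 2 : ℂ))⁻¹ = (2 : ℂ)⁻¹ := by
      rw [← mul_inv]
      congr 1
      norm_cast
      exact Real.mul_self_sqrt (by norm_num)
    rw [h2, Matrix.fromBlocks_multiply]
    have e1 : (1 : Matrix (Fin (2 ^ (m - 1))) (Fin (2 ^ (m - 1))) ℂ) * 1 + 1 * 1 = (2 : ℂ) • 1 := by
      simp [two_smul]
    have e2 : (1 : Matrix (Fin (2 ^ (m - 1))) (Fin (2 ^ (m - 1))) ℂ) * 1 + 1 * (-1) = 0 := by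
      simp
    have e3 : (1 : Matrix (Fin (2 ^ (m - 1))) (Fin (2 ^ (m - 1))) ℂ) * 1 + (-1) * 1 = 0 := by
      simp
    have e4 : (1 : Matrix (Fin (2 ^ (m - 1))) (Fin (2 ^ (m - 1))) ℂ) * 1 + (-1) * (-1) = (2 : ℂ) • 1 := by
      simp [two_smul]
    rw [e1, e2, e3, e4]
    have e5 : Matrix.fromBlocks ((2 : ℂ) • (1 : Matrix (Fin (2 ^ (m - 1))) (Fin (2 ^ (m - 1))) ℂ)) 0 0 ((2 : ℂ) • 1)
        = (2 : ℂ) • (1 : Matrix (Fin (2 ^ (m - 1)) ⊕ Fin (2 ^ (m - 1))) (Fin (2 ^ (m - 1)) ⊕ Fin (2 ^ (m - 1))) ℂ) := by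
      rw [← Matrix.fromBlocks_one, Matrix.fromBlocks_smul]
      simp
    rw [e5, smul_smul]
    norm_num
  rw [hH, reindex_one]

lemma prod_Pmat_add (m : ℕ) (a b : ℕ → ℝ) :
    ∀ n, n + 1 ≤ m →
    ((List.range n).map (fun t => Pmat m 1 (t + 2) (a t + b t))).prod
      = ((List.range n).map (fun t => Pmat m 1 (t + 2) (b t))).prod *
        ((List.range n).map (fun t => Pmat m 1 (t + 2) (a t))).prod := by
  intro n
  induction n with
  | zero => intro _; simp
  | succ n ih =>
    intro hn
    simp only [List.range_succ, List.map_append, List.prod_append,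
      List.map_cons, List.map_nil, List.prod_cons, List.prod_nil, mul_one]
    rw [ih (by omega)]
    rw [show a n + b n = b n + a n from by ring, ← Pmat_mul (show 2 ≤ n + 2 by omega) (by omega) (b n) (a n)]
    have hcomm : Commute (((List.range n).map (fun t => Pmat m 1 (t + 2) (a t))).prod)
        (Pmat m 1 (n + 2) (b n)) := by
      symm
      apply Commute.list_prod_right
      intro x hx
      rw [List.mem_map] at hx
      obtain ⟨t, ht, rfl⟩ := hx
      have htn := List.mem_range.1 ht
      exact Pmat_commute (by omega) (by omega) (by omega) (by omega) _ _
    exact hcomm.mul_mul_mul_comm _ _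

lemma prod_Pmat2 (r : ℕ) (hr : 3 ≤ r) (h2 : 1 ≤ r - 1) (b : ℕ → ℝ) :
    ∀ n, n ≤ r - 2 →
    ((List.range n).map (fun t => Pmat r 2 (t + 3) (b t))).prod
      = Matrix.reindex (sumEquiv (r - 1) h2) (sumEquiv (r - 1) h2)
          (Matrix.fromBlocks
            (((List.range n).map (fun t => Pmat (r - 1) 1 (t + 2) (b t))).prod) 0 0
            (((List.range n).map (fun t => Pmat (r - 1) 1 (t + 2) (b t))).prod)) := by
  intro n
  induction n with
  | zero =>
    intro _
    simp only [List.range_zero, List.map_nil, List.prod_nil]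
    rw [Matrix.fromBlocks_one, reindex_one]
  | succ n ih =>
    intro hn
    simp only [List.range_succ, List.map_append, List.prod_append,
      List.map_cons, List.map_nil, List.prod_cons, List.prod_nil, mul_one]
    rw [ih (by omega)]
    have hps := Pmat_struct r (n + 3) hr (by omega) (by omega) h2 (b n)
    have h31 : n + 3 - 1 = n + 2 := by omega
    rw [h31] at hps
    rw [hps, reindex_mul, Matrix.fromBlocks_multiply]
    simp only [Matrix.zero_mul, Matrix.mul_zero, add_zero, zero_add]

lemma conj_mul (m : ℕ) (h : 1 ≤ m)
    (A B : Matrix (Fin (2 ^ (m - 1)) ⊕ Fin (2 ^ (m - 1))) (Fin (2 ^ (m - 1)) ⊕ Fin (2 ^ (m - 1))) ℂ) :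
    (Ktilde m h * Matrix.reindex (sumEquiv m h) (sumEquiv m h) A * Ktilde m h) *
      (Ktilde m h * Matrix.reindex (sumEquiv m h) (sumEquiv m h) B * Ktilde m h)
      = Ktilde m h * Matrix.reindex (sumEquiv m h) (sumEquiv m h) (A * B) * Ktilde m h := by
  simp only [mul_assoc]
  rw [← mul_assoc (Ktilde m h) (Ktilde m h), Ktilde_sq, one_mul,
    ← mul_assoc (Matrix.reindex (sumEquiv m h) (sumEquiv m h) A), reindex_mul]

lemma Ktilde_comm_diag (m : ℕ) (h : 1 ≤ m) (Q : Matrix (Fin (2 ^ (m - 1))) (Fin (2 ^ (m - 1))) ℂ) :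
    Ktilde m h * Matrix.reindex (sumEquiv m h) (sumEquiv m h) (Matrix.fromBlocks Q 0 0 Q)
      = Matrix.reindex (sumEquiv m h) (sumEquiv m h) (Matrix.fromBlocks Q 0 0 Q) * Ktilde m h := by
  rw [Ktilde, reindex_mul, reindex_mul]
  congr 1
  rw [Matrix.smul_mul, Matrix.mul_smul]
  congr 1
  rw [Matrix.fromBlocks_multiply, Matrix.fromBlocks_multiply]
  simp

lemma conj_pull (m : ℕ) (h : 1 ≤ m) (Q : Matrix (Fin (2 ^ (m - 1))) (Fin (2 ^ (m - 1))) ℂ)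
    (A : Matrix (Fin (2 ^ (m - 1)) ⊕ Fin (2 ^ (m - 1))) (Fin (2 ^ (m - 1)) ⊕ Fin (2 ^ (m - 1))) ℂ) :
    Ktilde m h * Matrix.reindex (sumEquiv m h) (sumEquiv m h) (Matrix.fromBlocks Q 0 0 Q * A) * Ktilde m h
      = Matrix.reindex (sumEquiv m h) (sumEquiv m h) (Matrix.fromBlocks Q 0 0 Q) *
        (Ktilde m h * Matrix.reindex (sumEquiv m h) (sumEquiv m h) A * Ktilde m h) := by
  rw [← reindex_mul, ← mul_assoc, Ktilde_comm_diag m h Q]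
  simp only [mul_assoc]

lemma FB_diag_mul {q : Type*} [Fintype q] [DecidableEq q]
    (Q A D : Matrix q q ℂ) :
    Matrix.fromBlocks (Q * A) 0 0 (Q * D) = Matrix.fromBlocks Q 0 0 Q * Matrix.fromBlocks A 0 0 D := by
  rw [Matrix.fromBlocks_multiply]
  simp

lemma prod_conj (r : ℕ) (hr : 3 ≤ r) (h2 : 1 ≤ r - 1) (θ : ℕ → ℝ) :
    ∀ n, n ≤ r - 2 →
    ((List.range n).map (fun t =>
        Ktilde (r - 1) h2 *
          (Matrix.reindex (sumEquiv (r - 1) h2) (sumEquiv (r - 1) h2)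
            (Matrix.fromBlocks (Pmat (r - 1) 1 (t + 2) (θ t)) 0 0
              (Pmat (r - 1) 1 (t + 2) (θ t))ᵀ)) *
          Ktilde (r - 1) h2)).prod
      = Ktilde (r - 1) h2 *
          (Matrix.reindex (sumEquiv (r - 1) h2) (sumEquiv (r - 1) h2)
            (Matrix.fromBlocks
              (((List.range n).map (fun t => Pmat (r - 1) 1 (t + 2) (θ t))).prod) 0 0
              (((List.range n).map (fun t => Pmat (r - 1) 1 (t + 2) (-θ t))).prod))) *
          Ktilde (r - 1) h2 := by
  intro n
  induction n with
  | zero =>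
    intro _
    simp only [List.range_zero, List.map_nil, List.prod_nil]
    rw [Matrix.fromBlocks_one, reindex_one, mul_one, Ktilde_sq]
  | succ n ih =>
    intro hn
    simp only [List.range_succ, List.map_append, List.prod_append,
      List.map_cons, List.map_nil, List.prod_cons, List.prod_nil, mul_one]
    rw [ih (by omega)]
    rw [Pmat_transpose (show 2 ≤ n + 2 by omega) (by omega) (θ n)]
    rw [conj_mul, Matrix.fromBlocks_multiply]
    simp only [Matrix.zero_mul, Matrix.mul_zero, add_zero, zero_add]

end HomCone

namespace HomCone

/-- for `r ≥ 3` and real `θ_{k1}, θ_{k2}` (`k = 3, …, r`),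
`K̃ · diag(P₊, P₋) · K̃
  = Π_{k=3}^r P_{k2}^(r)(θ_{k2}) · Π_{k=3}^r [K̃ · diag(P_{k-1,1}^(r-1)(θ_{k1}),
      (P_{k-1,1}^(r-1)(θ_{k1}))ᵀ) · K̃]`,
where `P_± = Π_{k=3}^r P_{k-1,1}^(r-1)(±θ_{k1} + θ_{k2})`. -/
theorem statement6 (r : ℕ) (hr : 3 ≤ r) (θ₁ θ₂ : ℕ → ℝ) :
    Ktilde (r - 1) (by omega) *
        (Matrix.reindex (sumEquiv (r - 1) (by omega)) (sumEquiv (r - 1) (by omega))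
          (Matrix.fromBlocks
            (((List.range (r - 2)).map
                (fun t => Pmat (r - 1) 1 (t + 2) (θ₁ (t + 3) + θ₂ (t + 3)))).prod) 0 0
            (((List.range (r - 2)).map
                (fun t => Pmat (r - 1) 1 (t + 2) (-θ₁ (t + 3) + θ₂ (t + 3)))).prod))) *
        Ktilde (r - 1) (by omega) =
      (((List.range (r - 2)).map (fun t => Pmat r 2 (t + 3) (θ₂ (t + 3)))).prod) *
        (((List.range (r - 2)).map (fun t =>
            Ktilde (r - 1) (by omega) *
              (Matrix.reindex (sumEquiv (r - 1) (by omega)) (sumEquiv (r - 1) (by omega))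
                (Matrix.fromBlocks (Pmat (r - 1) 1 (t + 2) (θ₁ (t + 3))) 0 0
                  (Pmat (r - 1) 1 (t + 2) (θ₁ (t + 3)))ᵀ)) *
              Ktilde (r - 1) (by omega))).prod) := by
  have h2 : (1 : ℕ) ≤ r - 1 := by omega
  have e1 : (((List.range (r - 2)).map
        (fun t => Pmat (r - 1) 1 (t + 2) (θ₁ (t + 3) + θ₂ (t + 3)))).prod)
      = (((List.range (r - 2)).map (fun t => Pmat (r - 1) 1 (t + 2) (θ₂ (t + 3)))).prod) *
        (((List.range (r - 2)).map (fun t => Pmat (r - 1) 1 (t + 2) (θ₁ (t + 3)))).prod) :=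
    prod_Pmat_add (r - 1) (fun t => θ₁ (t + 3)) (fun t => θ₂ (t + 3)) (r - 2) (by omega)
  have e2 : (((List.range (r - 2)).map
        (fun t => Pmat (r - 1) 1 (t + 2) (-θ₁ (t + 3) + θ₂ (t + 3)))).prod)
      = (((List.range (r - 2)).map (fun t => Pmat (r - 1) 1 (t + 2) (θ₂ (t + 3)))).prod) *
        (((List.range (r - 2)).map (fun t => Pmat (r - 1) 1 (t + 2) (-θ₁ (t + 3)))).prod) :=
    prod_Pmat_add (r - 1) (fun t => -θ₁ (t + 3)) (fun t => θ₂ (t + 3)) (r - 2) (by omega)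
  have e3 : (((List.range (r - 2)).map (fun t => Pmat r 2 (t + 3) (θ₂ (t + 3)))).prod)
      = Matrix.reindex (sumEquiv (r - 1) h2) (sumEquiv (r - 1) h2)
          (Matrix.fromBlocks
            (((List.range (r - 2)).map (fun t => Pmat (r - 1) 1 (t + 2) (θ₂ (t + 3)))).prod) 0 0
            (((List.range (r - 2)).map (fun t => Pmat (r - 1) 1 (t + 2) (θ₂ (t + 3)))).prod)) :=
    prod_Pmat2 r hr h2 (fun t => θ₂ (t + 3)) (r - 2) le_rfl
  have e4 : (((List.range (r - 2)).map (fun t =>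
        Ktilde (r - 1) h2 *
          (Matrix.reindex (sumEquiv (r - 1) h2) (sumEquiv (r - 1) h2)
            (Matrix.fromBlocks (Pmat (r - 1) 1 (t + 2) (θ₁ (t + 3))) 0 0
              (Pmat (r - 1) 1 (t + 2) (θ₁ (t + 3)))ᵀ)) *
          Ktilde (r - 1) h2)).prod)
      = Ktilde (r - 1) h2 *
          (Matrix.reindex (sumEquiv (r - 1) h2) (sumEquiv (r - 1) h2)
            (Matrix.fromBlocks
              (((List.range (r - 2)).map (fun t => Pmat (r - 1) 1 (t + 2) (θ₁ (t + 3)))).prod) 0 0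
              (((List.range (r - 2)).map (fun t => Pmat (r - 1) 1 (t + 2) (-θ₁ (t + 3)))).prod))) *
          Ktilde (r - 1) h2 :=
    prod_conj r hr h2 (fun t => θ₁ (t + 3)) (r - 2) le_rfl
  rw [e1, e2, e3, e4, FB_diag_mul, conj_pull]

end HomCone
end
end

section
/- For r ≥ 2, 2 ≤ j ≤ r, and α ∈ ℂ: (det D_j^(r)(α))² = (c(α)·s(α))^{2^{r-1}}. -/
/-!
Common definitions for zeta functions associated with homogeneous cones
(following Nakashima, "Functional equations of zeta functions associated
with homogeneous cones"): the functions `c(z) = cos (π z / 2)`,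
`s(z) = sin (π z / 2)`, the recursive ordering of the sign set
`I_r = {1,-1}^r`, the Hadamard matrices `J^(r)`, the gamma-matrix
`A_r(α; Θ)`, the matrices `C_r`, `S_r`, the diagonal matrices `D_j^(r)(α)`,
and the rotation matrices `P_{kj}^(r)(θ) = c(θ)·I + s(θ)·X_{kj}^(r)`.
Matrices indexed by `I_s` are identified with `2^s × 2^s` matrices via the
recursive ordering, which is encoded by `ord s : Fin (2^s) → (Fin s → ℤ)`,
sending a position to the corresponding sign vector.
-/

noncomputable section
open Matrix Complex

namespace HomCone

lemma pi_div_two_cos : Complex.cos ((Real.pi : ℂ) / 2) = 0 := by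
  rw [show ((Real.pi : ℂ) / 2) = ((Real.pi / 2 : ℝ) : ℂ) by push_cast; ring,
    ← Complex.ofReal_cos, Real.cos_pi_div_two, Complex.ofReal_zero]

lemma pi_div_two_sin : Complex.sin ((Real.pi : ℂ) / 2) = 1 := by
  rw [show ((Real.pi : ℂ) / 2) = ((Real.pi / 2 : ℝ) : ℂ) by push_cast; ring,
    ← Complex.ofReal_sin, Real.sin_pi_div_two, Complex.ofReal_one]

lemma cc_add_one (α : ℂ) : cc (α + 1) = -ss α := by
  unfold cc ss
  rw [show (Real.pi : ℂ) * (α + 1) / 2 = Real.pi * α / 2 + Real.pi / 2 by ring,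
    Complex.cos_add, pi_div_two_cos, pi_div_two_sin]
  ring

lemma ss_add_one (α : ℂ) : ss (α + 1) = cc α := by
  unfold cc ss
  rw [show (Real.pi : ℂ) * (α + 1) / 2 = Real.pi * α / 2 + Real.pi / 2 by ring,
    Complex.sin_add, pi_div_two_cos, pi_div_two_sin]
  ring

lemma half_lt1 (m : ℕ) (i : Fin (2 ^ m)) : (i : ℕ) < 2 ^ (m + 1) := by
  have := i.isLt
  have h2 : 2 ^ (m + 1) = 2 ^ m * 2 := pow_succ 2 m
  omega

lemma half_lt2 (m : ℕ) (i : Fin (2 ^ m)) : 2 ^ m + (i : ℕ) < 2 ^ (m + 1) := by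
  have := i.isLt
  have h2 : 2 ^ (m + 1) = 2 ^ m * 2 := pow_succ 2 m
  omega

lemma prod_half (m : ℕ) (f : Fin (2 ^ (m + 1)) → ℂ) :
    ∏ i, f i =
      (∏ i : Fin (2 ^ m), f ⟨(i : ℕ), half_lt1 m i⟩) *
      ∏ i : Fin (2 ^ m), f ⟨2 ^ m + (i : ℕ), half_lt2 m i⟩ := by
  have hsum : 2 ^ m + 2 ^ m = 2 ^ (m + 1) := two_pow_pred (m + 1) (by omega)
  rw [← Fintype.prod_equiv (finCongr hsum) (fun i => f (finCongr hsum i)) f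
    (fun i => rfl), Fin.prod_univ_add]
  exact congrArg₂ (· * ·)
    (Finset.prod_congr rfl fun i _ => congrArg f (Fin.ext (by simp)))
    (Finset.prod_congr rfl fun i _ => congrArg f (Fin.ext (by simp [Nat.add_comm])))

lemma prod_dEnt_one (n : ℕ) (α : ℂ) :
    ∏ i, dEnt (n + 2) 1 α i = cc α ^ 2 ^ n * ss α ^ 2 ^ n := by
  have hidx : (n + 2 : ℕ) - 1 = n + 1 := by omega
  rw [show (∏ i, dEnt (n + 2) 1 α i) =
      ∏ i : Fin (2 ^ (n + 1)), dEnt (n + 2) 1 α (Fin.cast (by rw [hidx]) i) from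
    (Fintype.prod_equiv (finCongr (by rw [hidx])) _ _ fun i => rfl).symm]
  rw [prod_half n]
  congr 1
  · rw [Finset.prod_congr rfl fun (i : Fin (2 ^ n)) _ =>
      show dEnt (n + 2) 1 α _ = cc α by
        simp [dEnt, i.isLt]]
    simp
  · rw [Finset.prod_congr rfl fun (i : Fin (2 ^ n)) _ =>
      show dEnt (n + 2) 1 α _ = ss α by
        simp [dEnt]]
    simp

lemma prod_dEnt_two_succ (n : ℕ) (α : ℂ) :
    ∏ i, dEnt (n + 3) 2 α i =
      (∏ i, dEnt (n + 2) 1 α i) * ∏ i, dEnt (n + 2) 1 (α + 1) i := by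
  have hpow : 2 ^ (n + 3 - 1) = 2 ^ (n + 2) := by norm_num
  rw [show (∏ i, dEnt (n + 3) 2 α i) =
      ∏ i : Fin (2 ^ (n + 2)), dEnt (n + 3) 2 α (finCongr hpow.symm i) from
    Fintype.prod_equiv (finCongr hpow) _ _ (fun i => rfl)]
  rw [prod_half (n + 1)]
  congr 1
  · refine Finset.prod_congr rfl fun (i : Fin (2 ^ (n + 1))) _ => ?_
    show dEnt (n + 3) 2 α ⟨(i : ℕ), half_lt1 (n + 1) i⟩ = dEnt (n + 2) 1 α i
    rw [dEnt.eq_3]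
    exact dif_pos i.isLt
  · refine Finset.prod_congr rfl fun (i : Fin (2 ^ (n + 1))) _ => ?_
    show dEnt (n + 3) 2 α ⟨2 ^ (n + 1) + (i : ℕ), half_lt2 (n + 1) i⟩ =
      dEnt (n + 2) 1 (α + 1) i
    rw [dEnt.eq_3]
    have hneg : ¬ (2 ^ (n + 1) + (i : ℕ) < 2 ^ (n + 1)) := by omega
    refine (dif_neg hneg).trans ?_
    refine congrArg (dEnt (n + 2) 1 (α + 1)) (Fin.ext ?_)
    show 2 ^ (n + 1) + (i : ℕ) - 2 ^ (n + 3 - 2) = (i : ℕ)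
    have h32 : (n + 3 : ℕ) - 2 = n + 1 := by omega
    rw [h32]
    omega

lemma prod_dEnt_two (n : ℕ) (α : ℂ) :
    (∏ i, dEnt (n + 2) 2 α i) ^ 2 = (cc α * ss α) ^ 2 ^ (n + 1) := by
  cases n with
  | zero =>
    have : (∏ i, dEnt 2 2 α i) = dEnt 2 2 α 0 * dEnt 2 2 α 1 := by
      rw [show (∏ i, dEnt 2 2 α i) =
          ∏ i : Fin 2, dEnt 2 2 α (finCongr (by norm_num) i) from
        (Fintype.prod_equiv (finCongr (by norm_num)) _ _ fun i => rfl).symm,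
        Fin.prod_univ_two]
      rfl
    rw [this]
    have h0 : dEnt 2 2 α 0 = cc α := by
      rw [dEnt.eq_3, dif_pos (by decide)]
      simp [dEnt]
    have h1 : dEnt 2 2 α 1 = -ss α := by
      rw [dEnt.eq_3, dif_neg (by decide)]
      rw [show dEnt 1 1 (α + 1) _ = cc (α + 1) by simp [dEnt], cc_add_one]
    rw [h0, h1]
    ring
  | succ k =>
    rw [prod_dEnt_two_succ, prod_dEnt_one, prod_dEnt_one, cc_add_one, ss_add_one]
    have hne : ((-ss α) ^ 2 ^ k) ^ 2 = (ss α ^ 2 ^ k) ^ 2 := by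
      rw [← pow_mul, ← pow_mul, mul_comm (2 ^ k) 2, pow_mul, pow_mul, neg_sq]
    calc (cc α ^ 2 ^ k * ss α ^ 2 ^ k * ((-ss α) ^ 2 ^ k * cc α ^ 2 ^ k)) ^ 2
        = (cc α ^ 2 ^ k) ^ 2 * (ss α ^ 2 ^ k) ^ 2 * (((-ss α) ^ 2 ^ k) ^ 2 *
            (cc α ^ 2 ^ k) ^ 2) := by ring
      _ = (cc α * ss α) ^ 2 ^ (k + 2) := by
          rw [hne]
          rw [show (2 : ℕ) ^ (k + 2) = 2 ^ k * 4 by rw [pow_succ, pow_succ]; ring]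
          rw [mul_pow, pow_mul, pow_mul]
          ring

lemma prod_dEnt_succ (n d : ℕ) (α : ℂ) :
    ∏ i, dEnt (n + 3) (d + 3) α i =
      (∏ i, dEnt (n + 2) (d + 2) α i) * ∏ i, dEnt (n + 2) (d + 2) α i := by
  have hpow : 2 ^ (n + 3 - 1) = 2 ^ (n + 2) := by norm_num
  rw [show (∏ i, dEnt (n + 3) (d + 3) α i) =
      ∏ i : Fin (2 ^ (n + 2)), dEnt (n + 3) (d + 3) α (finCongr hpow.symm i) from
    Fintype.prod_equiv (finCongr hpow) _ _ (fun i => rfl)]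
  rw [prod_half (n + 1)]
  congr 1
  · refine Finset.prod_congr rfl fun (i : Fin (2 ^ (n + 1))) _ => ?_
    show dEnt (n + 3) (d + 3) α ⟨(i : ℕ), half_lt1 (n + 1) i⟩ =
      dEnt (n + 2) (d + 2) α i
    rw [dEnt.eq_4]
    exact dif_pos i.isLt
  · refine Finset.prod_congr rfl fun (i : Fin (2 ^ (n + 1))) _ => ?_
    show dEnt (n + 3) (d + 3) α ⟨2 ^ (n + 1) + (i : ℕ), half_lt2 (n + 1) i⟩ =
      dEnt (n + 2) (d + 2) α i
    rw [dEnt.eq_4]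
    have hneg : ¬ (2 ^ (n + 1) + (i : ℕ) < 2 ^ (n + 1)) := by omega
    refine (dif_neg hneg).trans ?_
    refine congrArg (dEnt (n + 2) (d + 2) α) (Fin.ext ?_)
    show 2 ^ (n + 1) + (i : ℕ) - 2 ^ (n + 3 - 2) = (i : ℕ)
    have h32 : (n + 3 : ℕ) - 2 = n + 1 := by omega
    rw [h32]
    omega

lemma key : ∀ (j n : ℕ), 2 ≤ j → j ≤ n + 2 → ∀ α : ℂ,
    (∏ i, dEnt (n + 2) j α i) ^ 2 = (cc α * ss α) ^ 2 ^ (n + 1) := by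
  intro j
  induction j with
  | zero => intro n h; omega
  | succ m ih =>
    intro n h2 hle α
    rcases Nat.lt_or_ge m 2 with hm | hm
    · interval_cases m
      · omega
      · exact prod_dEnt_two n α
    · -- m + 1 ≥ 3
      obtain ⟨d, rfl⟩ : ∃ d, m = d + 2 := ⟨m - 2, by omega⟩
      obtain ⟨n', rfl⟩ : ∃ n', n = n' + 1 := ⟨n - 1, by omega⟩
      rw [show n' + 1 + 2 = n' + 3 from rfl, prod_dEnt_succ n' d α]
      have := ih n' (by omega) (by omega) α
      calc ((∏ i, dEnt (n' + 2) (d + 2) α i) * ∏ i, dEnt (n' + 2) (d + 2) α i) ^ 2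
          = ((∏ i, dEnt (n' + 2) (d + 2) α i) ^ 2) ^ 2 := by ring
        _ = ((cc α * ss α) ^ 2 ^ (n' + 1)) ^ 2 := by rw [this]
        _ = (cc α * ss α) ^ 2 ^ (n' + 1 + 1) := by
            rw [← pow_mul, ← pow_succ]

/-- for `r ≥ 2` and `2 ≤ j ≤ r`,
`(det D_j^(r)(α))² = (c(α)s(α))^(2^(r-1))`. -/
theorem statement10 (r j : ℕ) (hr : 2 ≤ r) (hj2 : 2 ≤ j) (hjr : j ≤ r) (α : ℂ) :
    (Dmat r j α).det ^ 2 = (cc α * ss α) ^ 2 ^ (r - 1) := by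
  obtain ⟨n, rfl⟩ : ∃ n, r = n + 2 := ⟨r - 2, by omega⟩
  rw [Dmat, Matrix.det_diagonal]
  exact key j n hj2 hjr α

end HomCone
end
end
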